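/- Let n be a positive integer, U = ⊕_{i ∈ I} λ_n(i)^∞ a Cₙ-universe with I ⊆ ℤ/n containing 0 and closed under negation, and let d, e be natural numbers with d ∣ e ∣ n. Then ind_{C_d}^{C_e} res^{C_n}_{C_d} U embeds C_e-equivariantly into res^{C_n}_{C_e} U if and only if the subset (I mod e) of ℤ/e satisfies (I mod e) + d = (I mod e). -/

import Mathlib

open scoped Classical


open Complex

/-- `zetaRoot k = exp(2πi/k)`, a primitive `k`-th root of unity. -/
noncomputable def zetaRoot (k : ℕ) : ℂ :=
  Complex.exp (2 * Real.pi * Complex.I / k)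

lemma zetaRoot_ne_zero (k : ℕ) : zetaRoot k ≠ 0 := Complex.exp_ne_zero _

lemma isPrim_zetaRoot {e : ℕ} (he : e ≠ 0) : IsPrimitiveRoot (zetaRoot e) e :=
  Complex.isPrimitiveRoot_exp e he

lemma zetaRoot_pow_eq_one_iff {e : ℕ} (he : e ≠ 0) (c : ℕ) :
    zetaRoot e ^ c = 1 ↔ e ∣ c := (isPrim_zetaRoot he).pow_eq_one_iff_dvd c

lemma zeta_pow_eq_iff {e : ℕ} (he : e ≠ 0) (a b : ℕ) :
    zetaRoot e ^ a = zetaRoot e ^ b ↔ (a : ZMod e) = (b : ZMod e) := by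
  rw [ZMod.natCast_eq_natCast_iff, Nat.modEq_iff_dvd]
  constructor
  · intro h
    have h2 : zetaRoot e ^ ((b : ℤ) - a) = 1 := by
      rw [zpow_sub₀ (zetaRoot_ne_zero e), zpow_natCast, zpow_natCast, ← h]
      exact div_self (pow_ne_zero _ (zetaRoot_ne_zero e))
    exact ((isPrim_zetaRoot he).zpow_eq_one_iff_dvd _).mp h2
  · intro h
    have h2 : zetaRoot e ^ ((b : ℤ) - a) = 1 :=
      ((isPrim_zetaRoot he).zpow_eq_one_iff_dvd _).mpr h
    rw [zpow_sub₀ (zetaRoot_ne_zero e), zpow_natCast, zpow_natCast,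
      div_eq_one_iff_eq (pow_ne_zero _ (zetaRoot_ne_zero e))] at h2
    exact h2.symm

lemma zetaRoot_pow_div {d m e : ℕ} (hd : d ≠ 0) (hm : m ≠ 0) (hme : d * m = e) :
    zetaRoot e ^ m = zetaRoot d := by
  rw [zetaRoot, zetaRoot, ← Complex.exp_nat_mul]
  congr 1
  have he : (e : ℂ) = (d : ℂ) * m := by rw [← hme]; push_cast; ring
  rw [he]
  have : (d : ℂ) ≠ 0 := Nat.cast_ne_zero.mpr hd
  have : (m : ℂ) ≠ 0 := Nat.cast_ne_zero.mpr hm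
  field_simp

lemma conj_zetaRoot (e : ℕ) : (starRingEnd ℂ) (zetaRoot e) = (zetaRoot e)⁻¹ := by
  rw [zetaRoot, ← Complex.exp_conj, ← Complex.exp_neg]
  congr 1
  simp only [map_div₀, map_mul, Complex.conj_I, map_ofNat, Complex.conj_natCast,
    Complex.conj_ofReal]
  ring

-- Fin helpers
lemma fin_val_add_one {m : ℕ} [NeZero m] (b : Fin m) :
    ((b + 1 : Fin m) : ℕ) = if (b : ℕ) = m - 1 then 0 else (b : ℕ) + 1 := by
  have h2 : ((b + 1 : Fin m) : ℕ) = ((b : ℕ) + (1 % m)) % m := by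
    rw [Fin.val_add, Fin.val_one']
  have hb : (b : ℕ) < m := b.isLt
  have hm : m ≠ 0 := NeZero.ne m
  rw [h2]
  rcases Nat.lt_or_ge 1 m with h | h
  · rw [Nat.mod_eq_of_lt h]
    split_ifs with hc
    · rw [hc]
      have : m - 1 + 1 = m := by omega
      rw [this, Nat.mod_self]
    · exact Nat.mod_eq_of_lt (by omega)
  · have hm1 : m = 1 := by omega
    subst hm1
    simp at hb ⊢

lemma fin_val_sub_one {m : ℕ} [NeZero m] (a : Fin m) :
    ((a - 1 : Fin m) : ℕ) = if (a : ℕ) = 0 then m - 1 else (a : ℕ) - 1 := by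
  have h2 : ((a - 1 : Fin m) : ℕ) = (m - ((1: Fin m) : ℕ) + (a : ℕ)) % m := by
    rw [Fin.sub_def]
  have h1 : ((1 : Fin m) : ℕ) = 1 % m := Fin.val_one' m
  have hb : (a : ℕ) < m := a.isLt
  have hm : m ≠ 0 := NeZero.ne m
  rw [h2, h1]
  rcases Nat.lt_or_ge 1 m with h | h
  · rw [Nat.mod_eq_of_lt h]
    split_ifs with hc
    · rw [hc]
      exact Nat.mod_eq_of_lt (by omega)
    · have : m - 1 + (a:ℕ) = m + ((a:ℕ) - 1) := by omega
      rw [this, Nat.add_mod_left]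
      exact Nat.mod_eq_of_lt (by omega)
  · have hm1 : m = 1 := by omega
    subst hm1
    simp at hb ⊢

lemma key_sum {m : ℕ} [NeZero m] (w z : ℂ) (hw : w ^ m = z) (g f : Fin m → ℂ)
    (hg : ∀ a, g a = if (a : ℕ) = 0 then z * f (a - 1) else f (a - 1)) :
    ∑ a : Fin m, w ^ (a : ℕ) * g a = w * ∑ a : Fin m, w ^ (a : ℕ) * f a := by
  have hm : m ≠ 0 := NeZero.ne m
  rw [Finset.mul_sum,
    ← Equiv.sum_comp (Equiv.addRight (1 : Fin m)) (fun a => w ^ (a : ℕ) * g a)]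
  refine Finset.sum_congr rfl fun b _ => ?_
  simp only [Equiv.coe_addRight]
  rw [hg, add_sub_cancel_right]
  have hwm : w * w ^ (m - 1) = z := by
    rw [← hw]
    conv_rhs => rw [show m = (m - 1) + 1 by omega]
    rw [pow_succ]
    ring
  by_cases hc : (b : ℕ) = m - 1
  · have h0 : ((b + 1 : Fin m) : ℕ) = 0 := by rw [fin_val_add_one]; simp [hc]
    rw [h0, if_pos rfl, pow_zero, one_mul, hc, ← hwm]
    ring
  · have h0 : ((b + 1 : Fin m) : ℕ) = (b : ℕ) + 1 := by rw [fin_val_add_one]; simp [hc]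
    rw [h0, if_neg (Nat.succ_ne_zero _), pow_succ]
    ring

lemma geom_ortho {m : ℕ} (hm : m ≠ 0) {ω : ℂ} (hω : ∀ c : ℕ, ω ^ c = 1 ↔ m ∣ c) (c : ℕ) :
    ∑ a' : Fin m, ω ^ ((a' : ℕ) * c) = if m ∣ c then (m : ℂ) else 0 := by
  have h1 : ∀ a' : Fin m, ω ^ ((a' : ℕ) * c) = (ω ^ c) ^ (a' : ℕ) := fun a => by
    rw [← pow_mul, mul_comm]
  simp_rw [h1]
  rw [Fin.sum_univ_eq_sum_range (fun k => (ω ^ c) ^ k) m]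
  split_ifs with h
  · rw [(hω c).mpr h]
    simp
  · have h1 : ω ^ c ≠ 1 := fun hc => h ((hω c).mp hc)
    rw [geom_sum_eq h1]
    have h2 : (ω ^ c) ^ m = 1 := by
      rw [← pow_mul, mul_comm, pow_mul, (hω m).mpr dvd_rfl, one_pow]
    rw [h2]
    simp

lemma dft_inv {m : ℕ} (hm : m ≠ 0) {ω : ℂ} (hω : ∀ c : ℕ, ω ^ c = 1 ↔ m ∣ c)
    (f : Fin m → ℂ)
    (h : ∀ a' : Fin m, ∑ a : Fin m, ω ^ ((a' : ℕ) * (a : ℕ)) * f a = 0) (b : Fin m) :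
    f b = 0 := by
  have key : ∑ a' : Fin m, ω ^ ((a' : ℕ) * (m - (b : ℕ))) *
      (∑ a : Fin m, ω ^ ((a' : ℕ) * (a : ℕ)) * f a) = 0 := by
    simp_rw [h]
    simp
  have e1 : ∀ (a' a : Fin m), ω ^ ((a' : ℕ) * (m - (b : ℕ) + (a : ℕ))) * f a
      = ω ^ ((a' : ℕ) * (m - (b : ℕ))) * (ω ^ ((a' : ℕ) * (a : ℕ)) * f a) := by
    intro a' a
    rw [Nat.mul_add, pow_add]
    ring
  have key2 : ∑ a : Fin m, (∑ a' : Fin m, ω ^ ((a' : ℕ) * (m - (b : ℕ) + (a : ℕ)))) * f a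
      = 0 := by
    calc ∑ a : Fin m, (∑ a' : Fin m, ω ^ ((a' : ℕ) * (m - (b : ℕ) + (a : ℕ)))) * f a
        = ∑ a : Fin m, ∑ a' : Fin m, ω ^ ((a' : ℕ) * (m - (b : ℕ) + (a : ℕ))) * f a := by
          simp_rw [Finset.sum_mul]
      _ = ∑ a' : Fin m, ∑ a : Fin m, ω ^ ((a' : ℕ) * (m - (b : ℕ) + (a : ℕ))) * f a :=
          Finset.sum_comm
      _ = 0 := by
          simp_rw [e1, ← Finset.mul_sum]
          exact key
  have key3 : ∀ a : Fin m, (∑ a' : Fin m, ω ^ ((a' : ℕ) * (m - (b : ℕ) + (a : ℕ))))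
      = if a = b then (m : ℂ) else 0 := by
    intro a
    rw [geom_ortho hm hω]
    have hb : (b : ℕ) < m := b.isLt
    have ha : (a : ℕ) < m := a.isLt
    by_cases hab : a = b
    · subst hab
      simp [show m - (a:ℕ) + (a:ℕ) = m by omega]
    · have hnd : ¬ (m ∣ m - (b : ℕ) + (a : ℕ)) := by
        rintro ⟨k, hk⟩
        have hab2 : (a : ℕ) ≠ (b : ℕ) := fun hv => hab (Fin.ext hv)
        match k with
        | 0 => omega
        | 1 => omega
        | (k + 2) =>
          rw [show m * (k + 2) = m * k + 2 * m by ring] at hk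
          have : 0 ≤ m * k := Nat.zero_le _
          omega
      simp [hnd, hab]
  simp_rw [key3, ite_mul, zero_mul] at key2
  rw [Finset.sum_ite_eq' Finset.univ b] at key2
  simp at key2
  rcases key2 with h' | h'
  · exact absurd h' (by exact_mod_cast hm)
  · exact h'

/-- The model of the `C_n`-universe `U = ⊕_{i ∈ I} λ_n(i)^∞`: the direct sum
of countably many copies of `λ_n(i)` for each `i ∈ I`, realized on the space
of functions `(ℕ × I) → ℂ`. -/
def UnivSpace (n : ℕ) (I : Set (ZMod n)) : Type :=
  (ℕ × I) → ℂ

noncomputable instance (n : ℕ) (I : Set (ZMod n)) :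
    AddCommGroup (UnivSpace n I) := Pi.addCommGroup

noncomputable instance (n : ℕ) (I : Set (ZMod n)) :
    Module ℝ (UnivSpace n I) := Pi.module _ _ _

/-- The generator `g^{n/e}` of `C_e ⊆ C_n` acting on `res^{C_n}_{C_e} U`:
since `res^n_e λ_n(i) = λ_e(i)`, it multiplies the `(k, i)`-coordinate by
`ζ_e^i`. -/
noncomputable def resGen (n e : ℕ) (I : Set (ZMod n)) :
    UnivSpace n I →ₗ[ℝ] UnivSpace n I where
  toFun f p := zetaRoot e ^ ((p.2 : ZMod n).val) * f p
  map_add' f g := by funext p; exact mul_add _ _ _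
  map_smul' c f := by funext p; exact mul_smul_comm c _ _

/-- The generator `g^{n/e}` of `C_e` acting on the induced universe
`ind_{C_d}^{C_e} res^{C_n}_{C_d} U`, realized on `Fin (e/d) → UnivSpace n I`
(coset coordinates for `C_e/C_d`): the cyclic shift, twisted on the `0`-th
coordinate by the generator action of `C_d` on `res^{C_n}_{C_d} U`. -/
noncomputable def indResGen (n e d : ℕ) (I : Set (ZMod n)) [NeZero (e / d)] :
    (Fin (e / d) → UnivSpace n I) →ₗ[ℝ] (Fin (e / d) → UnivSpace n I) where
  toFun F a := if (a : ℕ) = 0 then resGen n d I (F (a - 1)) else F (a - 1)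
  map_add' F G := by
    funext a; by_cases h : a = 0 <;> simp [h]
  map_smul' c F := by
    funext a; by_cases h : a = 0 <;> simp [h]


section Aux

variable (n e d : ℕ) (I : Set (ZMod n))

lemma resGen_apply (f : UnivSpace n I) (p : ℕ × ↥I) :
    resGen n e I f p = zetaRoot e ^ ((p.2 : ZMod n).val) * f p := rfl

lemma indResGen_apply [NeZero (e / d)] (F : Fin (e / d) → UnivSpace n I)
    (a : Fin (e / d)) (p : ℕ × ↥I) :
    indResGen n e d I F a p =
      if (a : ℕ) = 0 then zetaRoot d ^ ((p.2 : ZMod n).val) * F (a - 1) p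
      else F (a - 1) p := by
  show (if (a : ℕ) = 0 then resGen n d I (F (a - 1)) else F (a - 1)) p = _
  split_ifs <;> rfl

lemma indResGen_cmul [NeZero (e / d)] (c : ℂ) (F : Fin (e / d) → UnivSpace n I) :
    indResGen n e d I (fun a p => c * F a p) = fun a p => c * indResGen n e d I F a p := by
  funext a p
  rw [indResGen_apply]
  have h2 : indResGen n e d I F a p =
      if (a : ℕ) = 0 then zetaRoot d ^ ((p.2 : ZMod n).val) * F (a - 1) p
      else F (a - 1) p := indResGen_apply n e d I F a p
  erw [indResGen_apply]
  split_ifs <;> ring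

lemma indResGen_eigen [NeZero (e / d)] (i' : ↥I) (w : ℂ) (hw0 : w ≠ 0)
    (hwm : w ^ (e / d) = zetaRoot d ^ ((i' : ZMod n).val)) :
    indResGen n e d I (fun (a : Fin (e / d)) (p : ℕ × ↥I) =>
        if p = (0, i') then w⁻¹ ^ (a : ℕ) else 0) =
      fun (a : Fin (e / d)) (p : ℕ × ↥I) =>
        w * (if p = (0, i') then w⁻¹ ^ (a : ℕ) else 0) := by
  have hm : e / d ≠ 0 := NeZero.ne _
  funext a p
  erw [indResGen_apply]
  by_cases hp : p = (0, i')
  · subst hp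
    simp only [if_pos rfl, if_true]
    rw [fin_val_sub_one]
    by_cases ha : (a : ℕ) = 0
    · rw [if_pos ha, if_pos ha, ha, pow_zero, mul_one]
      rw [← hwm]
      have hsucc : w ^ (e / d) = w * w ^ (e / d - 1) := by
        conv_lhs => rw [show e / d = (e / d - 1) + 1 by omega]
        rw [pow_succ]
        ring
      rw [hsucc, inv_pow, mul_assoc, mul_inv_cancel₀ (pow_ne_zero _ hw0), mul_one]
    · rw [if_neg ha, if_neg ha]
      conv_rhs => rw [show (a : ℕ) = ((a : ℕ) - 1) + 1 by omega]
      rw [pow_succ, mul_comm (w⁻¹ ^ ((a : ℕ) - 1)) w⁻¹, ← mul_assoc,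
        mul_inv_cancel₀ hw0, one_mul]
  · simp [hp]

/-- The coordinate-encoding map for the constructed embedding. -/
def codeFn (m : ℕ) (J : ℕ × ↥I × Fin m → ↥I) (q : ℕ × ↥I × Fin m) : ℕ × ↥I :=
  (Nat.pair (Nat.pair q.1 (q.2.2 : ℕ)) ((q.2.1 : ZMod n).val), J q)

lemma codeFn_inj [NeZero n] (m : ℕ) (J : ℕ × ↥I × Fin m → ↥I) :
    Function.Injective (codeFn n I m J) := by
  rintro ⟨k, i, a⟩ ⟨k', i', a'⟩ h
  have h1 := congrArg Prod.fst h
  simp only [codeFn] at h1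
  rw [Nat.pair_eq_pair] at h1
  obtain ⟨h2, h3⟩ := h1
  rw [Nat.pair_eq_pair] at h2
  obtain ⟨hk, ha⟩ := h2
  have hi : i = i' := Subtype.ext (ZMod.val_injective n h3)
  exact Prod.ext hk (Prod.ext hi (Fin.ext ha))

/-- The coefficient functional of the constructed embedding. -/
noncomputable def Lfun (m : ℕ) (q : ℕ × ↥I × Fin m) (F : Fin m → UnivSpace n I) : ℂ :=
  ∑ a : Fin m, (zetaRoot e ^ (((q.2.1 : ZMod n)).val + d * (q.2.2 : ℕ))) ^ (a : ℕ) *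
    F a (q.1, q.2.1)

/-- The constructed equivariant embedding. -/
noncomputable def phiFun (m : ℕ) (J : ℕ × ↥I × Fin m → ↥I) :
    (Fin m → UnivSpace n I) →ₗ[ℝ] UnivSpace n I where
  toFun F p := if h : ∃ q, codeFn n I m J q = p then Lfun n e d I m h.choose F else 0
  map_add' F G := by
    funext p
    show (if h : ∃ q, codeFn n I m J q = p then Lfun n e d I m h.choose (F + G) else 0)
      = (if h : ∃ q, codeFn n I m J q = p then Lfun n e d I m h.choose F else 0)
        + (if h : ∃ q, codeFn n I m J q = p then Lfun n e d I m h.choose G else 0)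
    by_cases h : ∃ q, codeFn n I m J q = p
    · rw [dif_pos h, dif_pos h, dif_pos h, Lfun, Lfun, Lfun, ← Finset.sum_add_distrib]
      refine Finset.sum_congr rfl fun a _ => ?_
      have : (F + G) a (h.choose.1, h.choose.2.1)
          = F a (h.choose.1, h.choose.2.1) + G a (h.choose.1, h.choose.2.1) := rfl
      rw [this]
      ring
    · rw [dif_neg h, dif_neg h, dif_neg h, add_zero]
  map_smul' c F := by
    funext p
    show (if h : ∃ q, codeFn n I m J q = p then Lfun n e d I m h.choose (c • F) else 0)
      = c • (if h : ∃ q, codeFn n I m J q = p then Lfun n e d I m h.choose F else 0)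
    by_cases h : ∃ q, codeFn n I m J q = p
    · rw [dif_pos h, dif_pos h, Lfun, Lfun, Complex.real_smul, Finset.mul_sum]
      refine Finset.sum_congr rfl fun a _ => ?_
      have : (c • F) a (h.choose.1, h.choose.2.1)
          = (c : ℂ) * F a (h.choose.1, h.choose.2.1) := Complex.real_smul
      rw [this]
      ring
    · rw [dif_neg h, dif_neg h, smul_zero]

lemma phiFun_apply (m : ℕ) (J : ℕ × ↥I × Fin m → ↥I) (F : Fin m → UnivSpace n I)
    (p : ℕ × ↥I) :
    phiFun n e d I m J F p
      = if h : ∃ q, codeFn n I m J q = p then Lfun n e d I m h.choose F else 0 := rfl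

lemma phiFun_inj [NeZero n] (m : ℕ) (he : e ≠ 0) (hd : d ≠ 0) (hm : m ≠ 0)
    (hdm : d * m = e) (J : ℕ × ↥I × Fin m → ↥I) :
    Function.Injective (phiFun n e d I m J) := by
  have hzero : ∀ F : Fin m → UnivSpace n I, phiFun n e d I m J F = 0 → F = 0 := by
    intro F hF
    funext a p
    obtain ⟨k, i'⟩ := p
    have hω : ∀ c : ℕ, (zetaRoot e ^ d) ^ c = 1 ↔ m ∣ c := by
      intro c
      rw [← pow_mul, zetaRoot_pow_eq_one_iff he]
      constructor
      · intro hc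
        rw [← hdm] at hc
        exact (mul_dvd_mul_iff_left hd).mp hc
      · intro hc
        rw [← hdm]
        exact mul_dvd_mul_left d hc
    have hL : ∀ a' : Fin m,
        ∑ b : Fin m, (zetaRoot e ^ (((i' : ZMod n)).val + d * (a' : ℕ))) ^ (b : ℕ) *
          F b (k, i') = 0 := by
      intro a'
      have hcode : ∃ q, codeFn n I m J q = codeFn n I m J (k, i', a') := ⟨(k, i', a'), rfl⟩
      have hF' := congrFun hF (codeFn n I m J (k, i', a'))
      rw [phiFun_apply, dif_pos hcode] at hF'
      have hchq : hcode.choose = (k, i', a') := codeFn_inj n I m J hcode.choose_spec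
      rw [hchq] at hF'
      exact hF'
    have hdft : ∀ b : Fin m,
        zetaRoot e ^ (((i' : ZMod n)).val * (b : ℕ)) * F b (k, i') = 0 := by
      intro b
      have hrow : ∀ a' : Fin m, ∑ b' : Fin m, (zetaRoot e ^ d) ^ ((a' : ℕ) * (b' : ℕ)) *
          (zetaRoot e ^ (((i' : ZMod n)).val * (b' : ℕ)) * F b' (k, i')) = 0 := by
        intro a'
        rw [← hL a']
        refine Finset.sum_congr rfl fun b' _ => ?_
        rw [← pow_mul, ← pow_mul,
          show (((i' : ZMod n)).val + d * (a' : ℕ)) * (b' : ℕ)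
            = d * ((a' : ℕ) * (b' : ℕ)) + ((i' : ZMod n)).val * (b' : ℕ) from by ring,
          pow_add]
        ring
      exact dft_inv hm hω
        (fun b' => zetaRoot e ^ (((i' : ZMod n)).val * (b' : ℕ)) * F b' (k, i')) hrow b
    have hb := hdft a
    rcases mul_eq_zero.mp hb with h' | h'
    · exact absurd h' (pow_ne_zero _ (zetaRoot_ne_zero e))
    · exact h'
  intro F G hFG
  have hsub : phiFun n e d I m J (F - G) = 0 := by rw [map_sub, hFG, sub_self]
  have := hzero _ hsub
  exact sub_eq_zero.mp this

lemma phiFun_comm [NeZero n] [NeZero (e / d)] (he : e ≠ 0) (hd : d ≠ 0)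
    (hdm : d * (e / d) = e) (J : ℕ × ↥I × Fin (e / d) → ↥I)
    (hJ : ∀ q, (((J q : ZMod n)).val : ZMod e)
      = ((((q.2.1 : ZMod n)).val : ZMod e)) + (d : ZMod e) * ((q.2.2 : ℕ) : ZMod e))
    (F : Fin (e / d) → UnivSpace n I) :
    phiFun n e d I (e / d) J (indResGen n e d I F)
      = resGen n e I (phiFun n e d I (e / d) J F) := by
  have hz : ((d : ZMod e)) * ((e / d : ℕ) : ZMod e) = 0 := by
    rw [← Nat.cast_mul, hdm, ZMod.natCast_self]
  funext p
  rw [resGen_apply, phiFun_apply, phiFun_apply]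
  by_cases h : ∃ q, codeFn n I (e / d) J q = p
  · rw [dif_pos h, dif_pos h]
    have hcq : codeFn n I (e / d) J h.choose = p := h.choose_spec
    have hWm : (zetaRoot e ^ (((h.choose.2.1 : ZMod n)).val + d * (h.choose.2.2 : ℕ)))
          ^ (e / d)
        = zetaRoot d ^ ((h.choose.2.1 : ZMod n)).val := by
      rw [← pow_mul, ← zetaRoot_pow_div hd (NeZero.ne _) hdm, ← pow_mul,
        zeta_pow_eq_iff he]
      push_cast
      linear_combination (((h.choose.2.2 : Fin (e / d)) : ℕ) : ZMod e) * hz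
    have hg : ∀ a : Fin (e / d), indResGen n e d I F a (h.choose.1, h.choose.2.1)
        = if (a : ℕ) = 0
          then zetaRoot d ^ ((h.choose.2.1 : ZMod n)).val * F (a - 1) (h.choose.1, h.choose.2.1)
          else F (a - 1) (h.choose.1, h.choose.2.1) := by
      intro a
      exact indResGen_apply n e d I F a (h.choose.1, h.choose.2.1)
    have hkey := key_sum (zetaRoot e ^ (((h.choose.2.1 : ZMod n)).val + d * (h.choose.2.2 : ℕ)))
      (zetaRoot d ^ ((h.choose.2.1 : ZMod n)).val) hWm
      (fun a => indResGen n e d I F a (h.choose.1, h.choose.2.1))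
      (fun a => F a (h.choose.1, h.choose.2.1)) hg
    have hζJ : zetaRoot e ^ ((p.2 : ZMod n).val)
        = zetaRoot e ^ (((h.choose.2.1 : ZMod n)).val + d * (h.choose.2.2 : ℕ)) := by
      have hp2 : p.2 = J h.choose := (congrArg Prod.snd hcq).symm
      rw [hp2, zeta_pow_eq_iff he]
      push_cast
      exact hJ h.choose
    show Lfun n e d I (e / d) h.choose (indResGen n e d I F)
        = zetaRoot e ^ ((p.2 : ZMod n).val) * Lfun n e d I (e / d) h.choose F
    rw [hζJ]
    exact hkey
  · rw [dif_neg h, dif_neg h, mul_zero]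

end Aux

/-- Let `U = ⊕_{i ∈ I} λ_n(i)^∞` be a `C_n`-universe, where
`I ⊆ ℤ/n` contains `0` and is closed under negation, and let `d ∣ e ∣ n`.
Then `ind_{C_d}^{C_e} res^{C_n}_{C_d} U` embeds `C_e`-equivariantly into
`res^{C_n}_{C_e} U` (i.e. there is an injective `ℝ`-linear map intertwining
the generator actions) if and only if `(I mod e) + d = (I mod e)` in `ℤ/e`. -/
theorem stmt13 (n e d : ℕ) (hn : 0 < n) (he : 0 < e) (hd : 0 < d)
    (hde : d ∣ e) (hen : e ∣ n) (I : Set (ZMod n))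
    (h0 : (0 : ZMod n) ∈ I) (hneg : ∀ i ∈ I, -i ∈ I) :
    haveI : NeZero (e / d) :=
      ⟨Nat.pos_iff_ne_zero.mp (Nat.div_pos (Nat.le_of_dvd he hde) hd)⟩
    (∃ φ : (Fin (e / d) → UnivSpace n I) →ₗ[ℝ] UnivSpace n I,
        Function.Injective φ ∧
        ∀ F, φ (indResGen n e d I F) = resGen n e I (φ F)) ↔
      (fun x => x + (d : ZMod e)) '' ((ZMod.castHom hen (ZMod e)) '' I) =
        (ZMod.castHom hen (ZMod e)) '' I := by

  haveI hnz : NeZero (e / d) :=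
    ⟨Nat.pos_iff_ne_zero.mp (Nat.div_pos (Nat.le_of_dvd he hde) hd)⟩
  haveI : NeZero n := ⟨hn.ne'⟩
  haveI : NeZero e := ⟨he.ne'⟩
  have hm0 : e / d ≠ 0 := NeZero.ne _
  have hdm : d * (e / d) = e := Nat.mul_div_cancel' hde
  have hcastHom : ∀ i : ZMod n, (ZMod.castHom hen (ZMod e)) i = ((i.val : ℕ) : ZMod e) := by
    intro i
    rw [ZMod.castHom_apply, ← ZMod.natCast_val]
  have hz : ((d : ZMod e)) * ((e / d : ℕ) : ZMod e) = 0 := by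
    rw [← Nat.cast_mul, hdm, ZMod.natCast_self]
  constructor
  · rintro ⟨φ, hinj, hcomm⟩
    have claim : ∀ z ∈ (ZMod.castHom hen (ZMod e)) '' I,
        z + (d : ZMod e) ∈ (ZMod.castHom hen (ZMod e)) '' I := by
      rintro _ ⟨i, hi, rfl⟩
      set iv := i.val with hiv
      set w : ℂ := zetaRoot e ^ (iv + d) with hw
      have hw0 : w ≠ 0 := pow_ne_zero _ (zetaRoot_ne_zero e)
      have hζd : zetaRoot e ^ (e / d) = zetaRoot d := zetaRoot_pow_div hd.ne' hm0 hdm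
      have hwm : w ^ (e / d) = zetaRoot d ^ (((⟨i, hi⟩ : ↥I) : ZMod n).val) := by
        show w ^ (e / d) = zetaRoot d ^ iv
        rw [hw, ← pow_mul, ← hζd, ← pow_mul, zeta_pow_eq_iff he.ne']
        push_cast
        linear_combination hz
      set u : Fin (e / d) → UnivSpace n I := fun (a : Fin (e / d)) (p : ℕ × ↥I) =>
        if p = (0, (⟨i, hi⟩ : ↥I)) then w⁻¹ ^ (a : ℕ) else 0 with hu
      set u' : Fin (e / d) → UnivSpace n I := fun a p => Complex.I * u a p with hu'
      have heig : indResGen n e d I u = fun a p => w * u a p :=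
        indResGen_eigen n e d I ⟨i, hi⟩ w hw0 hwm
      have heig' : indResGen n e d I u' = fun a p => w * u' a p := by
        rw [hu', indResGen_cmul]
        funext a p
        simp only [heig]
        show Complex.I * (w * u a p) = w * (Complex.I * u a p)
        ring
      have hcomb : indResGen n e d I u = w.re • u + w.im • u' := by
        rw [heig]
        funext a p
        show w * u a p = w.re • u a p + w.im • u' a p
        rw [Complex.real_smul, Complex.real_smul]
        have hup : u' a p = Complex.I * u a p := rfl
        rw [hup]
        conv_lhs => rw [← Complex.re_add_im w]
        ring
      have hcomb' : indResGen n e d I u' = w.re • u' - w.im • u := by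
        rw [heig']
        funext a p
        show w * u' a p = w.re • u' a p - w.im • u a p
        rw [Complex.real_smul, Complex.real_smul]
        have hup : u' a p = Complex.I * u a p := rfl
        rw [hup]
        have hwe : w = (↑w.re + ↑w.im * Complex.I : ℂ) := (Complex.re_add_im w).symm
        linear_combination (Complex.I * u a p) * hwe + (↑w.im * u a p : ℂ) * Complex.I_sq
      have h1 : resGen n e I (φ u) = w.re • (φ u) + w.im • (φ u') := by
        rw [← hcomm u, hcomb, map_add, map_smul, map_smul]
      have h2 : resGen n e I (φ u') = w.re • (φ u') - w.im • (φ u) := by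
        rw [← hcomm u', hcomb', map_sub, map_smul, map_smul]
      have hu0 : u ≠ 0 := by
        intro h0'
        have h1' := congrFun (congrFun h0' 0) (0, (⟨i, hi⟩ : ↥I))
        rw [hu] at h1'
        simp only [if_pos rfl, Fin.val_zero, pow_zero] at h1'
        exact one_ne_zero h1'
      have hx0 : φ u ≠ 0 := fun h0' => hu0 (hinj (by rw [h0', map_zero]))
      obtain ⟨P, hP⟩ : ∃ P, φ u P ≠ 0 := by
        by_contra hcon
        push_neg at hcon
        exact hx0 (funext hcon)
      have hv1 := congrFun h1 P
      have hv2 := congrFun h2 P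
      rw [resGen_apply] at hv1 hv2
      have hv1R : (w.re • (φ u) + w.im • (φ u')) P = ↑w.re * φ u P + ↑w.im * φ u' P := by
        show w.re • (φ u P) + w.im • (φ u' P) = _
        rw [Complex.real_smul, Complex.real_smul]
      have hv2R : (w.re • (φ u') - w.im • (φ u)) P = ↑w.re * φ u' P - ↑w.im * φ u P := by
        show w.re • (φ u' P) - w.im • (φ u P) = _
        rw [Complex.real_smul, Complex.real_smul]
      rw [hv1R] at hv1
      rw [hv2R] at hv2
      set X := φ u P with hX
      set X' := φ u' P with hX'
      have hwe : w = (↑w.re + ↑w.im * Complex.I : ℂ) := (Complex.re_add_im w).symm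
      by_cases hY : X - Complex.I * X' = 0
      · have hY' : X + Complex.I * X' ≠ 0 := by
          intro h0'
          apply hP
          have h2X : (2 : ℂ) * X = 0 := by linear_combination hY + h0'
          have := mul_eq_zero.mp h2X
          simpa using this
        have heq : zetaRoot e ^ ((P.2 : ZMod n).val) = ↑w.re - ↑w.im * Complex.I := by
          have hgoal : zetaRoot e ^ ((P.2 : ZMod n).val) * (X + Complex.I * X')
              = (↑w.re - ↑w.im * Complex.I) * (X + Complex.I * X') := by
            linear_combination hv1 + Complex.I * hv2 + (↑w.im * X' : ℂ) * Complex.I_sq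
          exact mul_right_cancel₀ hY' hgoal
        have hns : Complex.normSq w = 1 := by
          have h1' : w * (starRingEnd ℂ) w = ↑(Complex.normSq w) := Complex.mul_conj w
          rw [hw, map_pow, conj_zetaRoot, inv_pow,
            mul_inv_cancel₀ (pow_ne_zero _ (zetaRoot_ne_zero e))] at h1'
          exact_mod_cast h1'.symm
        have hns' : (↑w.re : ℂ) ^ 2 + (↑w.im : ℂ) ^ 2 = 1 := by
          have hc := congrArg (Complex.ofReal) hns
          rw [Complex.normSq_apply] at hc
          push_cast at hc
          linear_combination hc
        have hprod : zetaRoot e ^ ((P.2 : ZMod n).val) * w = 1 := by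
          rw [heq]
          linear_combination (↑w.re - ↑w.im * Complex.I : ℂ) * hwe + hns'
            - (↑w.im : ℂ) ^ 2 * Complex.I_sq
        rw [hw, ← pow_add] at hprod
        have hdvd : e ∣ ((P.2 : ZMod n).val + (iv + d)) :=
          (zetaRoot_pow_eq_one_iff he.ne' _).mp hprod
        have hcast : (((P.2 : ZMod n).val : ZMod e)) + ((iv : ZMod e) + (d : ZMod e)) = 0 := by
          have hc := (ZMod.natCast_eq_zero_iff _ e).mpr hdvd
          push_cast at hc
          linear_combination hc
        refine ⟨-(P.2 : ZMod n), hneg _ P.2.2, ?_⟩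
        rw [map_neg, hcastHom, hcastHom]
        linear_combination -hcast
      · have heq : zetaRoot e ^ ((P.2 : ZMod n).val) = w := by
          have hgoal : zetaRoot e ^ ((P.2 : ZMod n).val) * (X - Complex.I * X')
              = w * (X - Complex.I * X') := by
            linear_combination hv1 - Complex.I * hv2 - (X - Complex.I * X') * hwe
              + (↑w.im * X' : ℂ) * Complex.I_sq
          exact mul_right_cancel₀ hY hgoal
        rw [hw, zeta_pow_eq_iff he.ne'] at heq
        refine ⟨(P.2 : ZMod n), P.2.2, ?_⟩
        rw [hcastHom, hcastHom]
        push_cast at heq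
        rw [heq]
    refine Set.eq_of_subset_of_ncard_le ?_ ?_ (Set.toFinite _)
    · rintro _ ⟨z, hz', rfl⟩
      exact claim z hz'
    · exact (Set.ncard_image_of_injective _ (add_left_injective (d : ZMod e))).ge
  · intro hI
    classical
    have hmem : ∀ i : ZMod n, i ∈ I → ∀ a' : ℕ, ∃ j, j ∈ I ∧
        ((j.val : ZMod e)) = (i.val : ZMod e) + (d : ZMod e) * (a' : ZMod e) := by
      intro i hi a'
      induction a' with
      | zero => exact ⟨i, hi, by push_cast; ring⟩
      | succ a' ih =>
        obtain ⟨j, hj, hj2⟩ := ih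
        have hmem2 : (ZMod.castHom hen (ZMod e)) j + (d : ZMod e)
            ∈ (ZMod.castHom hen (ZMod e)) '' I := by
          rw [← hI]
          exact ⟨(ZMod.castHom hen (ZMod e)) j, ⟨j, hj, rfl⟩, rfl⟩
        obtain ⟨j', hj', hj'2⟩ := hmem2
        refine ⟨j', hj', ?_⟩
        rw [← hcastHom j', hj'2, hcastHom j, hj2]
        push_cast
        ring
    have hch : ∀ q : ℕ × ↥I × Fin (e / d), ∃ j : ↥I,
        (((j : ZMod n)).val : ZMod e)
          = (((q.2.1 : ZMod n)).val : ZMod e) + (d : ZMod e) * ((q.2.2 : ℕ) : ZMod e) := by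
      intro q
      obtain ⟨j, hj, h2⟩ := hmem (q.2.1 : ZMod n) q.2.1.2 (q.2.2 : ℕ)
      exact ⟨⟨j, hj⟩, h2⟩
    choose J hJ using hch
    exact ⟨phiFun n e d I (e / d) J,
      phiFun_inj n e d I (e / d) he.ne' hd.ne' hm0 hdm J,
      phiFun_comm n e d I he.ne' hd.ne' hdm J hJ⟩
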